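/- Suppose the OSC holds. Then for each vertex u ∈ V, the attractor component F_u is uncountable and has no isolated points. -/

import Mathlib

open MeasureTheory Metric Set Filter Topology Asymptotics

noncomputable section

/-- Euclidean space `ℝ^m`. -/
abbrev Euc (m : ℕ) : Type := EuclideanSpace ℝ (Fin m)

/-- The topological support of a measure. -/
def mSupport {X : Type} [TopologicalSpace X] [MeasurableSpace X]
    (μ : Measure X) : Set X :=
  {x | ∀ U : Set X, IsOpen U → x ∈ U → 0 < μ U}

/-- The probability weight of a finite path (product of its edge weights). -/
def pathProb {E : Type} (w : E → ℝ) (p : List E) : ℝ := (p.map w).prod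

/-- `f` is a subpath of `g`. -/
def IsSubpath {E : Type} (f g : List E) : Prop := ∃ s t : List E, g = s ++ f ++ t

/-- The distance between two sets. -/
def setDist {X : Type} [PseudoMetricSpace X] (A B : Set X) : ℝ :=
  sInf (Set.image2 dist A B)

/-- The `q`-th packing moment `M_u^q(A,r)` of a measure `μ` on `A` at scale `r`:
the supremum of `∑_{x∈D} μ(B̄(x,r))^q` over `r`-separated finite subsets `D ⊆ A`. -/
def packMoment {m : ℕ} (μ : Measure (Euc m)) (q : ℝ) (A : Set (Euc m)) (r : ℝ) : ℝ :=
  sSup {s : ℝ | ∃ D : Finset (Euc m), ↑D ⊆ A ∧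
    (∀ x ∈ D, ∀ y ∈ D, x ≠ y → 2 * r < dist x y) ∧
    s = ∑ x ∈ D, (μ (Metric.closedBall x r)).toReal ^ q}

/-- The spectral radius of a real square matrix (via its complex spectrum). -/
def specRad {n : Type} [Fintype n] [DecidableEq n] (M : Matrix n n ℝ) : ENNReal :=
  spectralRadius ℂ (M.map (algebraMap ℝ ℂ))

/-- A matrix is irreducible if some power has a positive `ij` entry, for every `i j`. -/
def MatIrreducible {n : Type} [Fintype n] [DecidableEq n] (M : Matrix n n ℝ) : Prop :=
  ∀ i j : n, ∃ k : ℕ, 0 < (M ^ k) i j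

/-- A self-similar directed-graph IFS on `ℝ^m`: a finite strongly connected directed
multigraph with at least two edges out of each vertex, each edge carrying a contracting
similarity of `ℝ^m`. -/
structure GIFS (m : ℕ) (V E : Type) [Fintype V] [Fintype E] where
  src : E → V
  dst : E → V
  ratio : E → ℝ
  ratio_pos : ∀ e, 0 < ratio e
  ratio_lt_one : ∀ e, ratio e < 1
  map : E → Euc m → Euc m
  map_similarity : ∀ e x y, dist (map e x) (map e y) = ratio e * dist x y
  two_edges : ∀ u : V, ∃ e f : E, e ≠ f ∧ src e = u ∧ src f = u
  strongly_connected : ∀ u v : V, ∃ p : List E, p ≠ [] ∧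
    p.Chain' (fun a b => dst a = src b) ∧ p.head?.map src = some u ∧
    p.getLast?.map dst = some v

namespace GIFS

variable {m : ℕ} {V E : Type} [Fintype V] [Fintype E] (G : GIFS m V E)

/-- `p` is a directed path (consecutive edges match up). -/
def IsPath (p : List E) : Prop := p.Chain' (fun a b => G.dst a = G.src b)

/-- `p` is a nonempty directed path from `u` to `v`. -/
def IsPathFrom (u v : V) (p : List E) : Prop :=
  p ≠ [] ∧ G.IsPath p ∧ p.head?.map G.src = some u ∧ p.getLast?.map G.dst = some v

/-- The contraction `S_{e₁} ∘ ⋯ ∘ S_{e_k}` along a path. -/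
def pathMap (p : List E) : Euc m → Euc m := p.foldr (fun e f => G.map e ∘ f) id

/-- The contraction ratio along a path. -/
def pathRatio (p : List E) : ℝ := (p.map G.ratio).prod

/-- The terminal vertex of a path (with default `u` for the empty path). -/
def pathDst (u : V) (p : List E) : V := (p.getLast?.map G.dst).getD u

/-- `(F u)_{u ∈ V}` is the attractor: the unique list of nonempty compact sets with
`F u = ⋃_{e ∈ E_u¹} S_e(F_{t(e)})`. -/
def IsAttractor (F : V → Set (Euc m)) : Prop :=
  (∀ u, (F u).Nonempty) ∧ (∀ u, IsCompact (F u)) ∧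
  (∀ u, F u = ⋃ e ∈ {e : E | G.src e = u}, G.map e '' F (G.dst e))

/-- Probability weights on the edges: each in `(0,1)`, summing to `1` at each vertex. -/
def IsProbWeights (w : E → ℝ) : Prop :=
  (∀ e, w e ∈ Set.Ioo (0 : ℝ) 1) ∧
  (∀ u : V, ∑ e : E, Set.indicator {e : E | G.src e = u} w e = 1)

/-- `(μ u)_{u ∈ V}` are the self-similar measures: Borel probability measures with
`μ_u(A) = ∑_{e ∈ E_u¹} p_e μ_{t(e)}(S_e⁻¹(A))` and `supp μ_u = F u`. -/
def IsSelfSimilarMeasures (w : E → ℝ) (F : V → Set (Euc m)) (μ : V → Measure (Euc m)) : Prop :=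
  (∀ u, IsProbabilityMeasure (μ u)) ∧
  (∀ u (A : Set (Euc m)), MeasurableSet A →
    μ u A = ∑ e : E, Set.indicator {e : E | G.src e = u}
      (fun e => ENNReal.ofReal (w e) * μ (G.dst e) (G.map e ⁻¹' A)) e) ∧
  (∀ u, mSupport (μ u) = F u)

/-- The strong separation condition. -/
def SSC (F : V → Set (Euc m)) : Prop :=
  ∀ u : V, ∀ e f : E, G.src e = u → G.src f = u → e ≠ f →
    (G.map e '' F (G.dst e)) ∩ (G.map f '' F (G.dst f)) = ∅

/-- The open set condition with open sets `U`. -/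
def OSCWith (U : V → Set (Euc m)) : Prop :=
  (∀ u, (U u).Nonempty ∧ IsOpen (U u) ∧ Bornology.IsBounded (U u)) ∧
  (∀ e : E, G.map e '' U (G.dst e) ⊆ U (G.src e)) ∧
  (∀ u : V, ∀ e f : E, G.src e = u → G.src f = u → e ≠ f →
    (G.map e '' U (G.dst e)) ∩ (G.map f '' U (G.dst f)) = ∅)

/-- The open set condition. -/
def OSC : Prop := ∃ U : V → Set (Euc m), G.OSCWith U

variable [DecidableEq V]

/-- The matrix `A(q,β)` with `uv` entry `∑_{e ∈ E¹_{uv}} p_e^q r_e^β`. -/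
def matA (w : E → ℝ) (q β : ℝ) : Matrix V V ℝ :=
  Matrix.of fun u v => ∑ e : E,
    Set.indicator {e : E | G.src e = u ∧ G.dst e = v}
      (fun e => w e ^ q * G.ratio e ^ β) e

/-- The matrix `B(q,γ,l)` with `uv` entry `∑_{e ∈ E^l_{uv}, e ≠ l_u} p_e^q r_e^γ`. -/
def matB (w : E → ℝ) (q γ : ℝ) (l : ℕ) (lu : V → List E) : Matrix V V ℝ :=
  Matrix.of fun u v => ∑ p : List.Vector E l,
    Set.indicator {p : List.Vector E l | G.IsPathFrom u v p.toList ∧ p.toList ≠ lu u}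
      (fun p => pathProb w p.toList ^ q * G.pathRatio p.toList ^ γ) p

/-- The matrix of measures `P` with `uv` entry `∑_{e ∈ E¹_{uv}} p_e^q r_e^{β} δ_{ln(1/r_e)}`. -/
def matP (w : E → ℝ) (q β : ℝ) : V → V → Measure ℝ :=
  fun u v => ∑ e : E,
    (Set.indicator {e : E | G.src e = u ∧ G.dst e = v}
      (fun e => ENNReal.ofReal (w e ^ q * G.ratio e ^ β)) e) •
      Measure.dirac (Real.log ((G.ratio e)⁻¹))

end GIFS

/-- `P` is a lattice matrix of measures with span `lam`. -/
def IsLatticeMatrix {V : Type} (P : V → V → MeasureTheory.Measure ℝ) (lam : ℝ) : Prop :=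
  0 < lam ∧
  ∃ (L : V → V → ℝ) (b : V → V → ℝ),
    (∀ u v : V, 0 < L u v) ∧
    -- (a) each diagonal support generates the group `L u u • ℤ`
    (∀ u : V, AddSubgroup.closure (mSupport (P u u)) = AddSubgroup.zmultiples (L u u)) ∧
    -- (b) off-diagonal supports lie in `b u v + L u v • ℤ`, with `L u v` maximal
    (∀ u v : V, u ≠ v →
      (mSupport (P u v) ⊆ {x : ℝ | ∃ n : ℤ, x = b u v + n * L u v}) ∧
      (∀ L' : ℝ, 0 < L' →
        (∃ b' : ℝ, mSupport (P u v) ⊆ {x : ℝ | ∃ n : ℤ, x = b' + n * L'}) → L' ≤ L u v)) ∧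
    -- (c) the numbers `L u v` generate the group `lam • ℤ`
    (AddSubgroup.closure {x : ℝ | ∃ u v : V, x = L u v} = AddSubgroup.zmultiples lam) ∧
    -- (d) `supp P_uv + supp P_vw − supp P_uw ⊆ lam • ℤ`
    (∀ u v z : V, ∀ a ∈ mSupport (P u v), ∀ a' ∈ mSupport (P v z), ∀ a'' ∈ mSupport (P u z),
      ∃ n : ℤ, a + a' - a'' = n * lam)


section AuxiliaryLemmas

open scoped ENNReal NNReal

set_option maxHeartbeats 1000000

lemma sim_inner {m : ℕ} (h : Euc m → Euc m) (h0 : h 0 = 0)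
    (hd : ∀ a b, dist (h a) (h b) = dist a b) (a b : Euc m) :
    (inner ℝ (h a) (h b) : ℝ) = inner ℝ a b := by
  have hn : ∀ c, ‖h c‖ = ‖c‖ := fun c => by
    simpa [h0, dist_zero_right] using hd c 0
  have hnm : ‖h a - h b‖ = ‖a - b‖ := by
    simpa [dist_eq_norm] using hd a b
  have e1 := norm_sub_sq_real (h a) (h b)
  have e2 := norm_sub_sq_real a b
  rw [hn, hn, hnm] at e1
  nlinarith [e1, e2]

lemma sim_surj {m : ℕ} (f : Euc m → Euc m) {r : ℝ} (hr : 0 < r)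
    (hd : ∀ a b, dist (f a) (f b) = r * dist a b) : Function.Surjective f := by
  set h : Euc m → Euc m := fun a => r⁻¹ • (f a - f 0) with hh
  have h0 : h 0 = 0 := by simp [hh]
  have hdh : ∀ a b, dist (h a) (h b) = dist a b := by
    intro a b
    have h1 : ‖f a - f b‖ = r * ‖a - b‖ := by simpa [dist_eq_norm] using hd a b
    have : f a - f 0 - (f b - f 0) = f a - f b := by abel
    simp only [hh, dist_eq_norm, ← smul_sub, this, norm_smul, h1, norm_inv,
      Real.norm_eq_abs, abs_of_pos hr]
    field_simp
  have hinner : ∀ a b, (inner ℝ (h a) (h b) : ℝ) = inner ℝ a b := sim_inner h h0 hdh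
  have hadd : ∀ a b, h (a + b) = h a + h b := by
    intro a b
    have hz : (inner ℝ (h (a+b) - h a - h b) (h (a+b) - h a - h b) : ℝ) = 0 := by
      simp only [inner_sub_left, inner_sub_right, inner_add_left, inner_add_right, hinner]
      ring
    have := inner_self_eq_zero.mp hz
    have : h (a + b) - h a - h b = 0 := this
    linear_combination (norm := abel) this
  have hsmul : ∀ (c : ℝ) (a), h (c • a) = c • h a := by
    intro c a
    have hz : (inner ℝ (h (c • a) - c • h a) (h (c • a) - c • h a) : ℝ) = 0 := by
      simp only [inner_sub_left, inner_sub_right, real_inner_smul_left, real_inner_smul_right,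
        hinner]
      ring
    have := inner_self_eq_zero.mp hz
    linear_combination (norm := abel) this
  let L : Euc m →ₗ[ℝ] Euc m := ⟨⟨h, fun a b => hadd a b⟩, fun c a => hsmul c a⟩
  have hinj : Function.Injective L := by
    intro a b hab
    have := hdh a b
    rw [show h a = h b from hab, dist_self] at this
    exact dist_eq_zero.mp this.symm
  have hsurj : Function.Surjective L := LinearMap.injective_iff_surjective.mp hinj
  intro y
  obtain ⟨a, ha⟩ := hsurj (r⁻¹ • (y - f 0))
  refine ⟨a, ?_⟩
  have hfa : f a = f 0 + r • h a := by
    simp [hh, smul_smul, mul_inv_cancel₀ hr.ne']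
  rw [hfa, show h a = r⁻¹ • (y - f 0) from ha]
  simp [smul_smul, mul_inv_cancel₀ hr.ne']

lemma sim_ball {m : ℕ} (f : Euc m → Euc m) {r : ℝ} (hr : 0 < r)
    (hd : ∀ a b, dist (f a) (f b) = r * dist a b) (z : Euc m) (s : ℝ) :
    Metric.ball (f z) (r * s) ⊆ f '' Metric.ball z s := by
  intro y hy
  obtain ⟨a, rfl⟩ := sim_surj f hr hd y
  rw [Metric.mem_ball, hd] at hy
  exact ⟨a, Metric.mem_ball.mpr (lt_of_mul_lt_mul_left hy hr.le), rfl⟩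

lemma two_maps_false {m : ℕ} (hm : 1 ≤ m) (U : Set (Euc m)) (hUo : IsOpen U) (hUne : U.Nonempty)
    (T : Bool → Euc m → Euc m) (r : Bool → ℝ)
    (hr0 : ∀ b, 0 < r b) (hr1 : ∀ b, r b < 1)
    (hsim : ∀ b a c, dist (T b a) (T b c) = r b * dist a c)
    (hTU : ∀ b a, a ∈ U → T b a ∈ U)
    (x : Euc m) (hx : ∀ b, T b x = x)
    (hdisj : ∀ a c, a ∈ U → c ∈ U → T false a ≠ T true c) : False := by
  haveI : Nontrivial (Euc m) := by
    refine ⟨0, EuclideanSpace.single ⟨0, hm⟩ 1, fun hcon => ?_⟩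
    have := congrArg (fun v : Euc m => v ⟨0, hm⟩) hcon
    simp [EuclideanSpace.single] at this
  -- word maps
  set W : List Bool → Euc m → Euc m := fun w => w.foldr (fun b g => T b ∘ g) id with hW
  have Wnil : ∀ a, W [] a = a := fun a => rfl
  have Wcons : ∀ b w a, W (b :: w) a = T b (W w a) := fun b w a => rfl
  have Wapp : ∀ w p a, W (w ++ p) a = W w (W p a) := by
    intro w p a
    induction w with
    | nil => simp [Wnil]
    | cons b w ih => simp [Wcons, ih]
  set rW : List Bool → ℝ := fun w => (w.map r).prod with hrW
  have rWnil : rW [] = 1 := rfl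
  have rWcons : ∀ b w, rW (b :: w) = r b * rW w := fun b w => by simp [hrW]
  have rWapp : ∀ w p, rW (w ++ p) = rW w * rW p := fun w p => by simp [hrW]
  have hrW0 : ∀ w, 0 < rW w := by
    intro w
    induction w with
    | nil => simp [rWnil]
    | cons b w ih => rw [rWcons]; exact mul_pos (hr0 b) ih
  have hWsim : ∀ w a c, dist (W w a) (W w c) = rW w * dist a c := by
    intro w a c
    induction w with
    | nil => simp [Wnil, rWnil]
    | cons b w ih => rw [Wcons, Wcons, hsim, ih, rWcons, mul_assoc]
  have hWU : ∀ w a, a ∈ U → W w a ∈ U := by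
    intro w a ha
    induction w with
    | nil => simpa [Wnil]
    | cons b w ih => rw [Wcons]; exact hTU b _ ih
  have hWx : ∀ w, W w x = x := by
    intro w
    induction w with
    | nil => rfl
    | cons b w ih => rw [Wcons, ih, hx]
  -- injectivity of each T b
  have hTinj : ∀ b a c, T b a = T b c → a = c := by
    intro b a c hac
    have := hsim b a c
    rw [hac, dist_self] at this
    have := (mul_eq_zero.mp this.symm).resolve_left (hr0 b).ne'
    exact dist_eq_zero.mp this
  -- distinct equal-length words have disjoint images of U
  have key : ∀ (w w' : List Bool), w.length = w'.length → w ≠ w' →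
      ∀ a c, a ∈ U → c ∈ U → W w a ≠ W w' c := by
    intro w
    induction w with
    | nil =>
      intro w' hlen hne
      cases w' with
      | nil => exact absurd rfl hne
      | cons b w' => simp at hlen
    | cons b w ih =>
      intro w' hlen hne a c ha hc
      cases w' with
      | nil => simp at hlen
      | cons b' w' =>
        rw [Wcons, Wcons]
        by_cases hb : b = b'
        · subst hb
          have hwne : w ≠ w' := fun hw => hne (by rw [hw])
          intro hcon
          exact ih w' (by simpa using hlen) hwne a c ha hc (hTinj b _ _ hcon)
        · have h1 : W w a ∈ U := hWU w a ha
          have h2 : W w' c ∈ U := hWU w' c hc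
          cases b <;> cases b'
          · exact absurd rfl hb
          · exact hdisj _ _ h1 h2
          · exact fun hcon => hdisj _ _ h2 h1 hcon.symm
          · exact absurd rfl hb
  -- geometry setup
  obtain ⟨y₀, hy₀⟩ := hUne
  obtain ⟨s, hs, hball⟩ := Metric.isOpen_iff.mp hUo y₀ hy₀
  set R := dist y₀ x with hR
  have hR0 : 0 ≤ R := dist_nonneg
  set ρ := min (r false) (r true) with hρ
  have hρ0 : 0 < ρ := lt_min (hr0 false) (hr0 true)
  have hρ1 : ρ < 1 := lt_of_le_of_lt (min_le_left _ _) (hr1 false)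
  have hρle : ∀ b, ρ ≤ r b := by
    intro b
    cases b
    · exact min_le_left _ _
    · exact min_le_right _ _
  have hrWlow : ∀ w : List Bool, ρ ^ w.length ≤ rW w := by
    intro w
    induction w with
    | nil => simp [rWnil]
    | cons b w ih =>
      rw [rWcons, List.length_cons, pow_succ, mul_comm (ρ ^ w.length) ρ]
      exact mul_le_mul (hρle b) ih (pow_nonneg hρ0.le _) (hr0 b).le
  -- choose n large
  obtain ⟨n, hn⟩ := pow_unbounded_of_one_lt (((R + s) / (ρ * s)) ^ m) (one_lt_two (α := ℝ))
  -- padding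
  have hex : ∀ w : Fin n → Bool, ∃ k : ℕ, rW (List.ofFn w) * (r false) ^ k ≤ ρ ^ n := by
    intro w
    obtain ⟨k, hk⟩ := exists_pow_lt_of_lt_one
      (div_pos (pow_pos hρ0 n) (hrW0 (List.ofFn w))) (hr1 false)
    exact ⟨k, by
      rw [lt_div_iff₀ (hrW0 (List.ofFn w))] at hk
      linarith [hk]⟩
  set k : (Fin n → Bool) → ℕ := fun w => Nat.find (hex w) with hk
  set pw : (Fin n → Bool) → List Bool := fun w => List.ofFn w ++ List.replicate (k w) false
    with hpw
  have hAeq : ∀ w, rW (pw w) = rW (List.ofFn w) * (r false) ^ (k w) := by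
    intro w
    rw [hpw]
    simp only [rWapp]
    congr 1
    simp [hrW, List.map_replicate, List.prod_replicate]
  have hAupper : ∀ w, rW (pw w) ≤ ρ ^ n := by
    intro w; rw [hAeq]; exact Nat.find_spec (hex w)
  have hAlower : ∀ w, ρ ^ (n + 1) < rW (pw w) := by
    intro w
    rcases Nat.eq_zero_or_pos (k w) with h0 | hpos
    · have h1 : ρ ^ n ≤ rW (List.ofFn w) := by
        have := hrWlow (List.ofFn w)
        rwa [List.length_ofFn] at this
      have h2 : ρ ^ (n + 1) < ρ ^ n := by
        rw [pow_succ]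
        nlinarith [pow_pos hρ0 n]
      rw [hAeq, h0, pow_zero, mul_one]
      linarith
    · obtain ⟨j, hj⟩ := Nat.exists_eq_succ_of_ne_zero hpos.ne'
      have hmin : ¬ (rW (List.ofFn w) * (r false) ^ j ≤ ρ ^ n) := by
        have hj' : Nat.find (hex w) = j + 1 := hj
        exact Nat.find_min (hex w) (m := j) (by omega)
      push_neg at hmin
      rw [hAeq, hj]
      calc ρ ^ (n + 1) = ρ ^ n * ρ := pow_succ ρ n
        _ ≤ ρ ^ n * r false := by nlinarith [pow_pos hρ0 n, hρle false]
        _ < rW (List.ofFn w) * (r false) ^ j * r false :=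
            mul_lt_mul_of_pos_right hmin (hr0 false)
        _ = rW (List.ofFn w) * (r false) ^ (j + 1) := by rw [pow_succ, mul_assoc]
  set z : (Fin n → Bool) → Euc m := fun w => W (pw w) y₀ with hz
  have hzball : ∀ w, ball (z w) (ρ ^ (n + 1) * s) ⊆ W (pw w) '' ball y₀ s := by
    intro w
    refine subset_trans (ball_subset_ball ?_) (sim_ball (W (pw w)) (hrW0 (pw w))
      (hWsim (pw w)) y₀ s)
    exact mul_le_mul_of_nonneg_right (hAlower w).le hs.le
  have hzx : ∀ w, dist (z w) x ≤ ρ ^ n * R := by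
    intro w
    have : dist (z w) x = rW (pw w) * R := by
      conv_lhs => rw [hz, show x = W (pw w) x from (hWx (pw w)).symm]
      exact hWsim (pw w) y₀ x
    rw [this]
    exact mul_le_mul_of_nonneg_right (hAupper w) hR0
  have hsub : ∀ w, ball (z w) (ρ ^ (n + 1) * s) ⊆ ball x (ρ ^ n * (R + s)) := by
    intro w y hy
    rw [mem_ball] at hy ⊢
    have h1 : dist y x ≤ dist y (z w) + dist (z w) x := dist_triangle _ _ _
    have h2 : ρ ^ (n + 1) * s ≤ ρ ^ n * s := by
      have : ρ ^ (n + 1) ≤ ρ ^ n := by rw [pow_succ]; nlinarith [pow_pos hρ0 n]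
      nlinarith
    have := hzx w
    nlinarith [hy]
  have hpd : Pairwise (Function.onFun Disjoint fun w : Fin n → Bool =>
      ball (z w) (ρ ^ (n + 1) * s)) := by
    intro w w' hne
    rw [Function.onFun, Set.disjoint_left]
    intro y hy hy'
    obtain ⟨a, ha, hay⟩ := hzball w hy
    obtain ⟨c, hc, hcy⟩ := hzball w' hy'
    have haU : W (List.replicate (k w) false) a ∈ U := hWU _ a (hball ha)
    have hcU : W (List.replicate (k w') false) c ∈ U := hWU _ c (hball hc)
    have hlen : (List.ofFn w).length = (List.ofFn w').length := by
      simp [List.length_ofFn]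
    have hnel : List.ofFn w ≠ List.ofFn w' := fun hcon => hne (List.ofFn_injective hcon)
    refine key (List.ofFn w) (List.ofFn w') hlen hnel _ _ haU hcU ?_
    rw [← Wapp, ← Wapp]
    show W (pw w) a = W (pw w') c
    rw [hay, hcy]
  -- measure counting
  have hfr : Module.finrank ℝ (Euc m) = m := finrank_euclideanSpace_fin
  set B := volume (ball (0 : Euc m) 1) with hB
  have hB0 : B ≠ 0 := (measure_ball_pos volume 0 one_pos).ne'
  have hBtop : B ≠ ⊤ := measure_ball_lt_top.ne
  have hrr0 : (0:ℝ) ≤ ρ ^ (n + 1) * s := by positivity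
  have hRR0 : (0:ℝ) ≤ ρ ^ n * (R + s) := by positivity
  have hvol : ∀ w : Fin n → Bool, volume (ball (z w) (ρ ^ (n + 1) * s)) =
      ENNReal.ofReal ((ρ ^ (n + 1) * s) ^ m) * B := by
    intro w
    rw [Measure.addHaar_ball volume (z w) hrr0, hfr, hB]
  have hUnion : volume (⋃ w : Fin n → Bool, ball (z w) (ρ ^ (n + 1) * s)) ≤
      volume (ball x (ρ ^ n * (R + s))) :=
    measure_mono (Set.iUnion_subset hsub)
  rw [measure_iUnion hpd (fun w => measurableSet_ball)] at hUnion
  rw [tsum_fintype] at hUnion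
  simp only [hvol, Finset.sum_const, Finset.card_univ] at hUnion
  have hcard : Fintype.card (Fin n → Bool) = 2 ^ n := by
    simp [Fintype.card_fun]
  rw [hcard, Measure.addHaar_ball volume x hRR0, hfr, hB.symm] at hUnion
  rw [nsmul_eq_mul] at hUnion
  have hUnion2 : (2 ^ n : ℝ≥0∞) * ENNReal.ofReal ((ρ ^ (n + 1) * s) ^ m) ≤
      ENNReal.ofReal ((ρ ^ n * (R + s)) ^ m) := by
    rw [← ENNReal.mul_le_mul_iff_left hB0 hBtop, mul_assoc]
    exact_mod_cast hUnion
  have h2n : (2 ^ n : ℝ≥0∞) = ENNReal.ofReal ((2:ℝ) ^ n) := by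
    rw [ENNReal.ofReal_pow (by norm_num)]
    norm_num
  rw [h2n, ← ENNReal.ofReal_mul (by positivity)] at hUnion2
  have hreal : (2:ℝ) ^ n * (ρ ^ (n + 1) * s) ^ m ≤ (ρ ^ n * (R + s)) ^ m :=
    (ENNReal.ofReal_le_ofReal_iff (by positivity)).mp hUnion2
  -- derive the contradiction
  have hexp1 : (ρ ^ (n + 1) * s) ^ m = (ρ ^ n) ^ m * (ρ * s) ^ m := by
    rw [pow_succ, mul_assoc, mul_pow]
  have hexp2 : (ρ ^ n * (R + s)) ^ m = (ρ ^ n) ^ m * (R + s) ^ m := mul_pow _ _ m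
  rw [hexp1, hexp2] at hreal
  have hP : (0:ℝ) < (ρ ^ n) ^ m := by positivity
  have hfin : (2:ℝ) ^ n * (ρ * s) ^ m ≤ (R + s) ^ m := by
    rw [show (2:ℝ) ^ n * ((ρ ^ n) ^ m * (ρ * s) ^ m)
        = (ρ ^ n) ^ m * ((2:ℝ) ^ n * (ρ * s) ^ m) from by ring] at hreal
    exact le_of_mul_le_mul_left hreal hP
  have hρs : (0:ℝ) < (ρ * s) ^ m := by positivity
  have hlt : (R + s) ^ m < 2 ^ n * (ρ * s) ^ m := by
    have h1 : ((R + s) / (ρ * s)) ^ m = (R + s) ^ m / (ρ * s) ^ m := div_pow _ _ m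
    rw [h1, div_lt_iff₀ hρs] at hn
    linarith
  linarith


namespace GIFS

variable {m : ℕ} {V E : Type} [Fintype V] [Fintype E] (G : GIFS m V E)

lemma pathMap_nil (a : Euc m) : G.pathMap ([] : List E) a = a := rfl

lemma pathMap_cons (e : E) (p : List E) (a : Euc m) :
    G.pathMap (e :: p) a = G.map e (G.pathMap p a) := rfl

lemma pathRatio_nil : G.pathRatio ([] : List E) = 1 := rfl

lemma pathRatio_cons (e : E) (p : List E) :
    G.pathRatio (e :: p) = G.ratio e * G.pathRatio p := by
  simp [GIFS.pathRatio]

lemma pathRatio_pos (p : List E) : 0 < G.pathRatio p := by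
  induction p with
  | nil => simp [pathRatio_nil]
  | cons e p ih => rw [pathRatio_cons]; exact mul_pos (G.ratio_pos e) ih

lemma pathRatio_le_one (p : List E) : G.pathRatio p ≤ 1 := by
  induction p with
  | nil => simp [pathRatio_nil]
  | cons e p ih =>
    rw [pathRatio_cons]
    nlinarith [G.ratio_pos e, G.ratio_lt_one e, G.pathRatio_pos p]

lemma pathRatio_lt_one (p : List E) (hp : p ≠ []) : G.pathRatio p < 1 := by
  cases p with
  | nil => exact absurd rfl hp
  | cons e p =>
    rw [pathRatio_cons]
    nlinarith [G.ratio_pos e, G.ratio_lt_one e, G.pathRatio_pos p, G.pathRatio_le_one p]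

lemma pathMap_dist (p : List E) (a b : Euc m) :
    dist (G.pathMap p a) (G.pathMap p b) = G.pathRatio p * dist a b := by
  induction p with
  | nil => simp [pathMap_nil, pathRatio_nil]
  | cons e p ih =>
    rw [pathMap_cons, pathMap_cons, G.map_similarity, ih, pathRatio_cons, mul_assoc]

/-- Along a path from `u` to `v`, the path map sends any invariant family at `v` into
the member at `u`. -/
lemma pathMap_mem (K : V → Set (Euc m))
    (hK : ∀ e : E, ∀ y ∈ K (G.dst e), G.map e y ∈ K (G.src e)) :
    ∀ (p : List E) (u v : V), G.IsPathFrom u v p → ∀ y ∈ K v, G.pathMap p y ∈ K u := by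
  intro p
  induction p with
  | nil => intro u v h; exact absurd rfl h.1
  | cons e p ih =>
    intro u v h y hy
    obtain ⟨-, hchain, hhead, hlast⟩ := h
    have hsrc : G.src e = u := by
      simp only [List.head?_cons, Option.map_some] at hhead
      exact Option.some.inj hhead
    cases p with
    | nil =>
      have hdst : G.dst e = v := by
        simp only [List.getLast?_singleton, Option.map_some] at hlast
        exact Option.some.inj hlast
      rw [pathMap_cons, pathMap_nil, ← hsrc]
      exact hK e y (by rw [hdst]; exact hy)
    | cons e' q =>
      have hchain' := List.isChain_cons_cons.mp hchain
      have hpf : G.IsPathFrom (G.src e') v (e' :: q) := by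
        refine ⟨List.cons_ne_nil _ _, hchain'.2, by simp, ?_⟩
        rw [← hlast, List.getLast?_cons_cons]
      have hmem := ih (G.src e') v hpf y hy
      rw [pathMap_cons, ← hsrc]
      exact hK e _ (by rw [hchain'.1]; exact hmem)

/-- Along a path from `u` to `v`, the path map carries the selected fixed points. -/
lemma pathMap_fix (x : V → Euc m)
    (hx : ∀ e : E, G.map e (x (G.dst e)) = x (G.src e)) :
    ∀ (p : List E) (u v : V), G.IsPathFrom u v p → G.pathMap p (x v) = x u := by
  intro p
  induction p with
  | nil => intro u v h; exact absurd rfl h.1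
  | cons e p ih =>
    intro u v h
    obtain ⟨-, hchain, hhead, hlast⟩ := h
    have hsrc : G.src e = u := by
      simp only [List.head?_cons, Option.map_some] at hhead
      exact Option.some.inj hhead
    cases p with
    | nil =>
      have hdst : G.dst e = v := by
        simp only [List.getLast?_singleton, Option.map_some] at hlast
        exact Option.some.inj hlast
      rw [pathMap_cons, pathMap_nil, ← hsrc, ← hdst]
      exact hx e
    | cons e' q =>
      have hchain' := List.isChain_cons_cons.mp hchain
      have hpf : G.IsPathFrom (G.src e') v (e' :: q) := by
        refine ⟨List.cons_ne_nil _ _, hchain'.2, by simp, ?_⟩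
        rw [← hlast, List.getLast?_cons_cons]
      rw [pathMap_cons, ih (G.src e') v hpf, ← hsrc, ← hchain'.1]
      exact hx e

/-- Decomposition of points of the attractor along paths of length `n`. -/
lemma decomp (F : V → Set (Euc m))
    (hFeq : ∀ u, F u = ⋃ e ∈ {e : E | G.src e = u}, G.map e '' F (G.dst e))
    (hFmap : ∀ e : E, ∀ y ∈ F (G.dst e), G.map e y ∈ F (G.src e))
    (σ : ℝ) (hσ0 : 0 ≤ σ) (hσ : ∀ e : E, G.ratio e ≤ σ) :
    ∀ (n : ℕ) (u : V) (x : Euc m), x ∈ F u →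
      ∃ (v : V) (p : List E), x ∈ G.pathMap p '' F v ∧
        (∀ y ∈ F v, G.pathMap p y ∈ F u) ∧ G.pathRatio p ≤ σ ^ n := by
  intro n
  induction n with
  | zero =>
    intro u x hx
    exact ⟨u, [], ⟨x, hx, rfl⟩, fun y hy => hy, by rw [pathRatio_nil, pow_zero]⟩
  | succ n ih =>
    intro u x hx
    rw [hFeq u] at hx
    obtain ⟨e, he, y, hy, hxy⟩ := by simpa using hx
    obtain ⟨v, p, ⟨y', hy', hyy'⟩, hsub, hr⟩ := ih (G.dst e) y hy
    refine ⟨v, e :: p, ⟨y', hy', ?_⟩, ?_, ?_⟩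
    · rw [pathMap_cons, hyy', hxy]
    · intro z hz
      rw [pathMap_cons]
      have := hFmap e _ (hsub z hz)
      rwa [he] at this
    · rw [pathRatio_cons, pow_succ, mul_comm (σ ^ n) σ]
      exact mul_le_mul (hσ e) hr (G.pathRatio_pos p).le hσ0

end GIFS

end AuxiliaryLemmas

/-- **Lemma (2.4(a)).** If the OSC holds then each attractor component `F u` is
uncountable and has no isolated points. -/
theorem statement3
    {m : ℕ} (hm : 1 ≤ m) {V E : Type} [Fintype V] [Fintype E]
    (G : GIFS m V E)
    (F : V → Set (Euc m)) (hF : G.IsAttractor F)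
    (hOSC : G.OSC) :
    ∀ u : V, ¬ (F u).Countable ∧ ∀ x ∈ F u, x ∈ closure (F u \ {x}) := by
  classical
  obtain ⟨hFne, hFcpt, hFeq⟩ := hF
  obtain ⟨U, hUprops, hUmap, hUdisj⟩ := hOSC
  have hUmap' : ∀ e : E, ∀ y ∈ U (G.dst e), G.map e y ∈ U (G.src e) := fun e y hy =>
    hUmap e ⟨y, hy, rfl⟩
  have hFmap : ∀ e : E, ∀ y ∈ F (G.dst e), G.map e y ∈ F (G.src e) := by
    intro e y hy
    rw [hFeq (G.src e)]
    exact Set.mem_biUnion rfl ⟨y, hy, rfl⟩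
  have hsc : ∀ v w : V, ∃ p : List E, G.IsPathFrom v w p := by
    intro v w
    obtain ⟨p, h1, h2, h3, h4⟩ := G.strongly_connected v w
    exact ⟨p, h1, h2, h3, h4⟩
  intro u
  by_cases hsing : ∀ v : V, (F v).Subsingleton
  · -- degenerate case: all attractor parts are singletons; contradicts the OSC
    exfalso
    choose x hxF using hFne
    have hedge : ∀ e : E, G.map e (x (G.dst e)) = x (G.src e) := by
      intro e
      have h1 : G.map e (x (G.dst e)) ∈ F (G.src e) := hFmap e _ (hxF _)
      rw [(hsing (G.src e)).eq_singleton_of_mem (hxF (G.src e))] at h1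
      exact h1
    obtain ⟨e, f, hef, he, hf⟩ := G.two_edges u
    obtain ⟨pe, hpe⟩ := hsc (G.dst e) u
    obtain ⟨pf, hpf⟩ := hsc (G.dst f) u
    have hcyc : ∀ (g : E) (pg : List E), G.src g = u → G.IsPathFrom (G.dst g) u pg →
        G.IsPathFrom u u (g :: pg) := by
      intro g pg hg hpg
      obtain ⟨hne, hch, hh, hl⟩ := hpg
      refine ⟨List.cons_ne_nil _ _, ?_, by simp [hg], ?_⟩
      · show List.IsChain (fun a b => G.dst a = G.src b) (g :: pg)
        rw [List.isChain_cons]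
        refine ⟨?_, hch⟩
        intro b hb
        cases hhd : pg.head? with
        | none => rw [hhd] at hb; simp at hb
        | some c =>
          rw [hhd] at hb hh
          rw [Option.mem_some_iff] at hb
          simp only [Option.map_some, Option.some.injEq] at hh
          rw [← hb, hh]
      · obtain ⟨c, q, rfl⟩ := List.exists_cons_of_ne_nil hne
        rw [List.getLast?_cons_cons]
        exact hl
    have hce : G.IsPathFrom u u (e :: pe) := hcyc e pe he hpe
    have hcf : G.IsPathFrom u u (f :: pf) := hcyc f pf hf hpf
    set cyc : Bool → List E := fun b => cond b (f :: pf) (e :: pe) with hcycdef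
    have hcycpf : ∀ b, G.IsPathFrom u u (cyc b) := by
      intro b; cases b
      · exact hce
      · exact hcf
    have hcycne : ∀ b, cyc b ≠ [] := by
      intro b; cases b
      · exact List.cons_ne_nil _ _
      · exact List.cons_ne_nil _ _
    refine two_maps_false hm (U u) (hUprops u).2.1 (hUprops u).1
      (fun b => G.pathMap (cyc b)) (fun b => G.pathRatio (cyc b))
      (fun b => G.pathRatio_pos (cyc b))
      (fun b => G.pathRatio_lt_one (cyc b) (hcycne b))
      (fun b a c => G.pathMap_dist (cyc b) a c)
      (fun b a ha => G.pathMap_mem U hUmap' (cyc b) u u (hcycpf b) a ha)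
      (x u)
      (fun b => G.pathMap_fix x hedge (cyc b) u u (hcycpf b))
      ?_
    intro a c ha hc hcon
    have h1 : G.pathMap pe a ∈ U (G.dst e) := G.pathMap_mem U hUmap' pe (G.dst e) u hpe a ha
    have h2 : G.pathMap pf c ∈ U (G.dst f) := G.pathMap_mem U hUmap' pf (G.dst f) u hpf c hc
    have hmemint : G.pathMap (e :: pe) a ∈
        (G.map e '' U (G.dst e)) ∩ (G.map f '' U (G.dst f)) := by
      constructor
      · exact ⟨_, h1, (G.pathMap_cons e pe a).symm⟩
      · rw [show G.pathMap (e :: pe) a = G.pathMap (f :: pf) c from hcon]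
        exact ⟨_, h2, (G.pathMap_cons f pf c).symm⟩
    rw [hUdisj u e f he hf hef] at hmemint
    exact hmemint
  · -- main case: every attractor part has at least two points
    push_neg at hsing
    obtain ⟨v₀, hv₀⟩ := hsing
    obtain ⟨a₀, ha₀, b₀, hb₀, hab₀⟩ := hv₀
    have hinj : ∀ (p : List E) (a b : Euc m), a ≠ b → G.pathMap p a ≠ G.pathMap p b := by
      intro p a b hab hcon
      apply hab
      have hd := G.pathMap_dist p a b
      rw [hcon, dist_self] at hd
      exact dist_eq_zero.mp ((mul_eq_zero.mp hd.symm).resolve_left (G.pathRatio_pos p).ne')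
    have h2 : ∀ v : V, ∃ a b : Euc m, a ∈ F v ∧ b ∈ F v ∧ a ≠ b := by
      intro v
      obtain ⟨p, hp⟩ := hsc v v₀
      exact ⟨G.pathMap p a₀, G.pathMap p b₀,
        G.pathMap_mem F hFmap p v v₀ hp a₀ ha₀,
        G.pathMap_mem F hFmap p v v₀ hp b₀ hb₀, hinj p a₀ b₀ hab₀⟩
    haveI hEne : Nonempty E := ⟨(G.two_edges u).choose⟩
    have huniv : (Finset.univ : Finset E).Nonempty := Finset.univ_nonempty
    set σ : ℝ := Finset.univ.sup' huniv G.ratio with hσdef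
    have hσle : ∀ e : E, G.ratio e ≤ σ := fun e => Finset.le_sup' G.ratio (Finset.mem_univ e)
    have hσ0 : 0 ≤ σ := le_trans (G.ratio_pos (Classical.arbitrary E)).le (hσle _)
    have hσ1 : σ < 1 := by
      rw [hσdef, Finset.sup'_lt_iff]
      exact fun e _ => G.ratio_lt_one e
    have hbUnion : Bornology.IsBounded (⋃ v : V, F v) :=
      Bornology.isBounded_iUnion.mpr fun v => (hFcpt v).isBounded
    obtain ⟨C, hC⟩ := Metric.isBounded_iff.mp hbUnion
    obtain ⟨au, bu, hauF, hbuF, habu⟩ := h2 u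
    have hCpos : 0 < C := lt_of_lt_of_le (dist_pos.mpr habu)
      (hC (Set.mem_iUnion.mpr ⟨u, hauF⟩) (Set.mem_iUnion.mpr ⟨u, hbuF⟩))
    have hperfpt : ∀ x ∈ F u, x ∈ closure (F u \ {x}) := by
      intro x hx
      rw [Metric.mem_closure_iff]
      intro ε hε
      obtain ⟨n, hn⟩ := exists_pow_lt_of_lt_one (div_pos hε hCpos) hσ1
      obtain ⟨v, p, ⟨x', hx', hxx'⟩, hsub, hrp⟩ :=
        G.decomp F hFeq hFmap σ hσ0 hσle n u x hx
      obtain ⟨av, bv, havF, hbvF, habv⟩ := h2 v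
      have hdb : ∀ w ∈ F v, dist x (G.pathMap p w) < ε := by
        intro w hw
        rw [← hxx', G.pathMap_dist]
        calc G.pathRatio p * dist x' w ≤ σ ^ n * C := by
              refine mul_le_mul hrp
                (hC (Set.mem_iUnion.mpr ⟨v, hx'⟩) (Set.mem_iUnion.mpr ⟨v, hw⟩))
                dist_nonneg (pow_nonneg hσ0 n)
          _ < ε := by
              rw [← lt_div_iff₀ hCpos] at *
              exact hn
      by_cases hax : G.pathMap p av = x
      · refine ⟨G.pathMap p bv, ⟨hsub bv hbvF, ?_⟩, hdb bv hbvF⟩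
        intro hmem
        rw [Set.mem_singleton_iff, ← hax] at hmem
        exact hinj p av bv habv hmem.symm
      · exact ⟨G.pathMap p av, ⟨hsub av havF, fun hmem => hax hmem⟩, hdb av havF⟩
    have hperf : Perfect (F u) := by
      refine ⟨(hFcpt u).isClosed, ?_⟩
      rw [preperfect_iff_nhds]
      intro x hx t ht
      have hcl := hperfpt x hx
      rw [mem_closure_iff_nhds] at hcl
      obtain ⟨y, hyt, hyF, hyx⟩ := hcl t ht
      exact ⟨y, ⟨hyt, hyF⟩, hyx⟩
    refine ⟨?_, hperfpt⟩
    intro hcount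
    obtain ⟨g, hgr, -, hgi⟩ := hperf.exists_nat_bool_injection (hFne u)
    haveI := hcount.to_subtype
    have hgi' : Function.Injective (fun a : ℕ → Bool => (⟨g a, hgr ⟨a, rfl⟩⟩ : ↥(F u))) :=
      fun a b hab => hgi (congrArg Subtype.val hab)
    haveI : Countable (ℕ → Bool) := hgi'.countable
    obtain ⟨j, hj⟩ := Countable.exists_injective_nat (ℕ → Bool)
    refine Function.cantor_injective (fun t : Set ℕ => j fun n => decide (n ∈ t)) ?_
    intro t t' htt'
    have hfun := hj htt'
    ext n
    have := congrFun hfun n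
    constructor
    · intro hn
      by_contra hn'
      rw [decide_eq_true hn, eq_comm, decide_eq_true_eq] at this
      exact hn' this
    · intro hn
      by_contra hn'
      rw [decide_eq_true hn, decide_eq_true_eq] at this
      exact hn' this
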